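/- Let p₀ ∈ (0,1) and let p = p(n) satisfy 0 < p(n) ≤ p₀ and np(n)/log n → ∞. Let H̃₀ = [[(1/√α)A, −I],[I, 0]] and E = [[0, I + (1/α)(I − D)],[0, 0]] be 2n×2n block matrices. Then both (1/(2n))·‖H̃₀‖_F² and (1/(2n))·‖H̃₀ + E‖_F² are almost surely bounded: almost surely, limsup_{n→∞} (1/(2n))‖H̃₀‖_F² < ∞ and limsup_{n→∞} (1/(2n))‖H̃₀ + E‖_F² < ∞. -/

import Mathlib

open MeasureTheory Filter Matrix
open scoped ENNReal Topology

noncomputable section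

/-- Bernoulli measure on `Bool` with parameter `p` (clamped into `[0,1]`). -/
def bern (p : ℝ) : Measure Bool :=
  (PMF.bernoulli (min (Real.toNNReal p) 1) (min_le_right _ _)).toMeasure

instance (p : ℝ) : IsProbabilityMeasure (bern p) := by unfold bern; infer_instance

/-- The product Bernoulli measure governing the edge indicators of `G(n,p)`. -/
def edgeMeasure (n : ℕ) (p : ℝ) : Measure (Fin n × Fin n → Bool) :=
  Measure.pi fun _ => bern p

/-- The adjacency matrix of the random graph built from the edge indicators `ω`. -/
def adjMatrix (n : ℕ) (ω : Fin n × Fin n → Bool) : Matrix (Fin n) (Fin n) ℝ :=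
  fun i j =>
    if i < j then (if ω (i, j) then 1 else 0)
    else if j < i then (if ω (j, i) then 1 else 0) else 0

/-- Degree of vertex `i`. -/
def deg (n : ℕ) (ω : Fin n × Fin n → Bool) (i : Fin n) : ℝ := ∑ j, adjMatrix n ω i j

/-- The ℓ²→ℓ² operator norm of a matrix. -/
def opNorm {m : Type*} [Fintype m] [DecidableEq m] {K : Type*} [RCLike K]
    (M : Matrix m m K) : ℝ :=
  ‖(Matrix.toEuclideanLin M).toContinuousLinearMap‖

/-- Frobenius norm of a matrix. -/
def frobNorm {m : Type*} [Fintype m] {K : Type*} [RCLike K] (M : Matrix m m K) : ℝ :=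
  Real.sqrt (∑ i, ∑ j, ‖M i j‖ ^ 2)

/-- `∫ f dμ_M` where `μ_M` is the empirical spectral measure of `M`. -/
def esdInt {m : Type*} [Fintype m] [DecidableEq m] (M : Matrix m m ℂ) (f : ℂ → ℝ) : ℝ :=
  ((M.charpoly.roots).map f).sum / (Fintype.card m)

/-- The non-backtracking spectrum operator `H = [[A, I − D],[I, 0]]` as a complex matrix. -/
def Hmat (n : ℕ) (ω : Fin n × Fin n → Bool) :
    Matrix (Fin n ⊕ Fin n) (Fin n ⊕ Fin n) ℂ :=
  Matrix.fromBlocks ((adjMatrix n ω).map (fun x => (x : ℂ)))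
    (1 - Matrix.diagonal fun i => (deg n ω i : ℂ)) 1 0

/-- The partly averaged matrix `H₀ = [[A, −αI],[I, 0]]` with `α = (n−1)p − 1`. -/
def H0mat (n : ℕ) (p : ℝ) (ω : Fin n × Fin n → Bool) :
    Matrix (Fin n ⊕ Fin n) (Fin n ⊕ Fin n) ℂ :=
  Matrix.fromBlocks ((adjMatrix n ω).map (fun x => (x : ℂ)))
    (-((((n : ℝ) - 1) * p - 1 : ℝ) : ℂ) • 1) 1 0

/-- The rescaled partly averaged matrix `H̃₀ = [[(1/√α)A, −I],[I, 0]]` (real entries). -/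
def Ht0mat (n : ℕ) (p : ℝ) (ω : Fin n × Fin n → Bool) :
    Matrix (Fin n ⊕ Fin n) (Fin n ⊕ Fin n) ℝ :=
  Matrix.fromBlocks (((Real.sqrt (((n : ℝ) - 1) * p - 1))⁻¹ : ℝ) • adjMatrix n ω)
    (-1) 1 0

/-- The perturbation matrix `E = [[0, I + (1/α)(I − D)],[0, 0]]` (real entries). -/
def Emat (n : ℕ) (p : ℝ) (ω : Fin n × Fin n → Bool) :
    Matrix (Fin n ⊕ Fin n) (Fin n ⊕ Fin n) ℝ :=
  Matrix.fromBlocks 0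
    (1 + ((((n : ℝ) - 1) * p - 1)⁻¹ : ℝ) • (1 - Matrix.diagonal (deg n ω))) 0 0

namespace Stmt10Aux

/-- value of a Bool as a real number -/
def bv (x : Bool) : ℝ := if x then 1 else 0

lemma bv_nonneg (x : Bool) : 0 ≤ bv x := by unfold bv; split <;> norm_num
lemma bv_le_one (x : Bool) : bv x ≤ 1 := by unfold bv; split <;> norm_num

/-- the weight of coordinate `c` in the degree of vertex `i` -/
def wt (n : ℕ) (i : Fin n) (c : Fin n × Fin n) (x : Bool) : ℝ :=
  (if c.1 = i ∧ c.1 < c.2 then bv x else 0) + (if c.2 = i ∧ c.1 < c.2 then bv x else 0)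

lemma wt_eq (n : ℕ) (i : Fin n) (c : Fin n × Fin n) (x : Bool) :
    wt n i c x = if (c.1 = i ∨ c.2 = i) ∧ c.1 < c.2 then bv x else 0 := by
  unfold wt
  by_cases h1 : c.1 = i ∧ c.1 < c.2 <;> by_cases h2 : c.2 = i ∧ c.1 < c.2
  · exact absurd (h1.1.trans h2.1.symm) (ne_of_lt h1.2)
  · have h2' : ¬ c.2 = i := fun h => h2 ⟨h, h1.2⟩
    simp [h1.1, h1.2, h2']
  · have h1' : ¬ c.1 = i := fun h => h1 ⟨h, h2.2⟩
    simp [h2.1, h2.2, h1']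
  · have : ¬ ((c.1 = i ∨ c.2 = i) ∧ c.1 < c.2) := by
      rintro ⟨h | h, hlt⟩
      exacts [h1 ⟨h, hlt⟩, h2 ⟨h, hlt⟩]
    simp [h1, h2, this]

lemma adjMatrix_apply_eq (n : ℕ) (ω : Fin n × Fin n → Bool) (i j : Fin n) :
    adjMatrix n ω i j = (if i < j then bv (ω (i, j)) else 0)
      + (if j < i then bv (ω (j, i)) else 0) := by
  unfold adjMatrix bv
  by_cases h1 : i < j <;> by_cases h2 : j < i
  · exact absurd (h1.trans h2) (lt_irrefl _)
  · simp [h1, h2]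
  · simp [h1, h2]
  · simp [h1, h2]

lemma deg_eq_sum (n : ℕ) (ω : Fin n × Fin n → Bool) (i : Fin n) :
    deg n ω i = ∑ c : Fin n × Fin n, wt n i c (ω c) := by
  have hS1 : (∑ a : Fin n, ∑ b : Fin n, if a = i ∧ a < b then bv (ω (a, b)) else 0)
      = ∑ b : Fin n, if i < b then bv (ω (i, b)) else 0 := by
    rw [Finset.sum_eq_single i]
    · exact Finset.sum_congr rfl fun b _ => by by_cases h : i < b <;> simp [h]
    · intro a _ ha
      exact Finset.sum_eq_zero fun b _ => by simp [ha]
    · intro h; exact absurd (Finset.mem_univ i) h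
  have hS2 : (∑ a : Fin n, ∑ b : Fin n, if b = i ∧ a < b then bv (ω (a, b)) else 0)
      = ∑ a : Fin n, if a < i then bv (ω (a, i)) else 0 := by
    refine Finset.sum_congr rfl fun a _ => ?_
    rw [Finset.sum_eq_single i]
    · by_cases h : a < i <;> simp [h]
    · intro b _ hb; simp [hb]
    · intro h; exact absurd (Finset.mem_univ i) h
  calc deg n ω i = ∑ j, adjMatrix n ω i j := rfl
    _ = (∑ b : Fin n, if i < b then bv (ω (i, b)) else 0)
        + (∑ a : Fin n, if a < i then bv (ω (a, i)) else 0) := by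
        rw [← Finset.sum_add_distrib]
        exact Finset.sum_congr rfl fun j _ => adjMatrix_apply_eq n ω i j
    _ = ∑ c : Fin n × Fin n, wt n i c (ω c) := by
        rw [Fintype.sum_prod_type]
        simp only [wt, Finset.sum_add_distrib]
        rw [hS1, hS2]

end Stmt10Aux
namespace Stmt10Aux

lemma integral_bern (q : ℝ) (h0 : 0 ≤ q) (h1 : q ≤ 1) (f : Bool → ℝ) :
    ∫ x, f x ∂ bern q = (1 - q) * f false + q * f true := by
  unfold bern
  rw [PMF.integral_eq_sum]
  have hmin : min (Real.toNNReal q) 1 = Real.toNNReal q :=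
    min_eq_left (Real.toNNReal_le_one.mpr h1)
  have htrue : ((PMF.bernoulli (min (Real.toNNReal q) 1) (min_le_right _ _)) true).toReal
      = q := by
    rw [PMF.bernoulli_apply, Bool.cond_true, hmin, ENNReal.coe_toReal, Real.coe_toNNReal _ h0]
  have hfalse : ((PMF.bernoulli (min (Real.toNNReal q) 1) (min_le_right _ _)) false).toReal
      = 1 - q := by
    rw [PMF.bernoulli_apply, Bool.cond_false, hmin, ENNReal.coe_toReal,
      NNReal.coe_sub (Real.toNNReal_le_one.mpr h1)]
    rw [NNReal.coe_one, Real.coe_toNNReal _ h0]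
  rw [Fintype.sum_bool, htrue, hfalse]
  simp [mul_comm]
  ring

/-- the set of coordinates contributing to the degree of `i` has at most `n` elements -/
lemma card_edgeAt_le (n : ℕ) (i : Fin n) :
    (Finset.univ.filter
      (fun c : Fin n × Fin n => (c.1 = i ∨ c.2 = i) ∧ c.1 < c.2)).card ≤ n := by
  have := Finset.card_le_card_of_injOn
    (f := fun c : Fin n × Fin n => if c.1 = i then c.2 else c.1)
    (s := Finset.univ.filter (fun c : Fin n × Fin n => (c.1 = i ∨ c.2 = i) ∧ c.1 < c.2))
    (t := (Finset.univ : Finset (Fin n)))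
    (fun c _ => Finset.mem_univ _) ?_
  · simpa using this
  · intro c hc d hd h
    simp only [Finset.coe_filter, Set.mem_setOf_eq, Finset.mem_univ, true_and] at hc hd
    by_cases hc1 : c.1 = i <;> by_cases hd1 : d.1 = i <;> simp only [hc1, hd1, if_pos, if_neg,
      if_true, if_false] at h
    · exact Prod.ext (hc1.trans hd1.symm) h
    · -- c.1 = i, d.1 ≠ i so d.2 = i; h : c.2 = d.1
      have hd2 : d.2 = i := hd.1.resolve_left hd1
      have : c.2 < c.2 := by
        calc c.2 = d.1 := h
        _ < d.2 := hd.2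
        _ = c.1 := hd2.trans hc1.symm
        _ < c.2 := hc.2
      exact absurd this (lt_irrefl _)
    · have hc2 : c.2 = i := hc.1.resolve_left hc1
      have : d.2 < d.2 := by
        calc d.2 = c.1 := h.symm
        _ < c.2 := hc.2
        _ = d.1 := hc2.trans hd1.symm
        _ < d.2 := hd.2
      exact absurd this (lt_irrefl _)
    · have hc2 : c.2 = i := hc.1.resolve_left hc1
      have hd2 : d.2 = i := hd.1.resolve_left hd1
      exact Prod.ext h (hc2.trans hd2.symm)

lemma mgf_deg_le (n : ℕ) (q t : ℝ) (h0 : 0 ≤ q) (h1 : q ≤ 1) (ht : 0 ≤ t) (i : Fin n) :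
    ProbabilityTheory.mgf (fun ω => deg n ω i) (edgeMeasure n q) t
      ≤ Real.exp ((n : ℝ) * (q * (Real.exp t - 1))) := by
  letI : MeasureSpace Bool := ⟨bern q⟩
  haveI : SigmaFinite (volume : Measure Bool) := by
    change SigmaFinite (bern q); infer_instance
  have hq1 : 0 ≤ q * (Real.exp t - 1) :=
    mul_nonneg h0 (by simp [Real.one_le_exp_iff.mpr, sub_nonneg, Real.one_le_exp ht])
  have key : ProbabilityTheory.mgf (fun ω => deg n ω i) (edgeMeasure n q) t
      = ∏ c : Fin n × Fin n, ∫ x, Real.exp (t * wt n i c x) ∂ bern q := by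
    unfold ProbabilityTheory.mgf
    have : ∀ ω : Fin n × Fin n → Bool,
        Real.exp (t * deg n ω i) = ∏ c, Real.exp (t * wt n i c (ω c)) := by
      intro ω
      rw [deg_eq_sum, Finset.mul_sum, Real.exp_sum]
    rw [show (edgeMeasure n q) = (volume : Measure (Fin n × Fin n → Bool)) from rfl]
    calc ∫ ω, Real.exp (t * deg n ω i) = ∫ ω : Fin n × Fin n → Bool,
          ∏ c, Real.exp (t * wt n i c (ω c)) := by
          exact integral_congr_ae (Filter.Eventually.of_forall this)
      _ = ∏ c : Fin n × Fin n, ∫ x, Real.exp (t * wt n i c x) := by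
          exact MeasureTheory.integral_fintype_prod_eq_prod
            (fun c x => Real.exp (t * wt n i c x))
  rw [key]
  have hfac : ∀ c : Fin n × Fin n, ∫ x, Real.exp (t * wt n i c x) ∂ bern q
      ≤ Real.exp (q * (Real.exp t - 1) *
          (if (c.1 = i ∨ c.2 = i) ∧ c.1 < c.2 then 1 else 0)) := by
    intro c
    rw [integral_bern q h0 h1]
    have hbf : bv false = 0 := rfl
    have hbt : bv true = 1 := rfl
    by_cases h : (c.1 = i ∨ c.2 = i) ∧ c.1 < c.2
    · rw [wt_eq, wt_eq, if_pos h, if_pos h, if_pos h, hbf, hbt]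
      simp only [mul_zero, mul_one, Real.exp_zero]
      nlinarith [Real.add_one_le_exp (q * (Real.exp t - 1))]
    · rw [wt_eq, wt_eq, if_neg h, if_neg h, if_neg h]
      simp only [mul_zero, Real.exp_zero]
      norm_num
  calc (∏ c : Fin n × Fin n, ∫ x, Real.exp (t * wt n i c x) ∂ bern q)
      ≤ ∏ c : Fin n × Fin n, Real.exp (q * (Real.exp t - 1) *
          (if (c.1 = i ∨ c.2 = i) ∧ c.1 < c.2 then 1 else 0)) := by
        refine Finset.prod_le_prod (fun c _ => ?_) (fun c _ => hfac c)
        exact integral_nonneg fun x => (Real.exp_pos _).le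
    _ = Real.exp (∑ c : Fin n × Fin n, q * (Real.exp t - 1) *
          (if (c.1 = i ∨ c.2 = i) ∧ c.1 < c.2 then 1 else 0)) := by
        rw [Real.exp_sum]
    _ ≤ Real.exp ((n : ℝ) * (q * (Real.exp t - 1))) := by
        apply Real.exp_le_exp.mpr
        rw [← Finset.mul_sum, Finset.sum_boole, mul_comm ((n:ℝ)) _]
        apply mul_le_mul_of_nonneg_left _ hq1
        exact_mod_cast card_edgeAt_le n i

end Stmt10Aux
namespace Stmt10Aux

lemma meas_deg (n : ℕ) (i : Fin n) : Measurable fun ω : Fin n × Fin n → Bool => deg n ω i :=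
  measurable_of_countable _

lemma chernoff (n : ℕ) (q : ℝ) (h0 : 0 ≤ q) (h1 : q ≤ 1) (i : Fin n) :
    edgeMeasure n q {ω | 2 * (n : ℝ) * q ≤ deg n ω i}
      ≤ ENNReal.ofReal (Real.exp (-(2 * Real.log 2 - 1) * ((n : ℝ) * q))) := by
  haveI : IsProbabilityMeasure (edgeMeasure n q) := by unfold edgeMeasure; infer_instance
  have hint : Integrable (fun ω => Real.exp (Real.log 2 * deg n ω i)) (edgeMeasure n q) :=
    Integrable.of_finite
  have h := ProbabilityTheory.measure_ge_le_exp_mul_mgf (μ := edgeMeasure n q)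
    (X := fun ω => deg n ω i) (t := Real.log 2) (2 * (n : ℝ) * q)
    (Real.log_nonneg one_le_two) hint
  have hmgf := mgf_deg_le n q (Real.log 2) h0 h1 (Real.log_nonneg one_le_two) i
  have hchain : (edgeMeasure n q {ω | 2 * (n : ℝ) * q ≤ deg n ω i}).toReal
      ≤ Real.exp (-(2 * Real.log 2 - 1) * ((n : ℝ) * q)) := by
    calc (edgeMeasure n q {ω | 2 * (n : ℝ) * q ≤ deg n ω i}).toReal
        ≤ Real.exp (-(Real.log 2) * (2 * (n : ℝ) * q))
          * ProbabilityTheory.mgf (fun ω => deg n ω i) (edgeMeasure n q) (Real.log 2) := h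
      _ ≤ Real.exp (-(Real.log 2) * (2 * (n : ℝ) * q))
          * Real.exp ((n : ℝ) * (q * (Real.exp (Real.log 2) - 1))) :=
          mul_le_mul_of_nonneg_left hmgf (Real.exp_pos _).le
      _ = Real.exp (-(2 * Real.log 2 - 1) * ((n : ℝ) * q)) := by
          rw [← Real.exp_add, Real.exp_log two_pos]
          congr 1
          ring
  calc edgeMeasure n q {ω | 2 * (n : ℝ) * q ≤ deg n ω i}
      = ENNReal.ofReal ((edgeMeasure n q {ω | 2 * (n : ℝ) * q ≤ deg n ω i}).toReal) :=
        (ENNReal.ofReal_toReal (measure_ne_top _ _)).symm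
    _ ≤ _ := ENNReal.ofReal_le_ofReal hchain

/-- the bad event: some vertex has degree at least `2 n q` -/
def badSet (n : ℕ) (q : ℝ) : Set (Fin n × Fin n → Bool) :=
  ⋃ i : Fin n, {ω | 2 * (n : ℝ) * q ≤ deg n ω i}

lemma badSet_meas (n : ℕ) (q : ℝ) : MeasurableSet (badSet n q) :=
  MeasurableSet.iUnion fun i => measurableSet_le measurable_const (meas_deg n i)

lemma badSet_bound (n : ℕ) (q : ℝ) (h0 : 0 ≤ q) (h1 : q ≤ 1)
    (hn : 1 ≤ n) (hlog : 1 ≤ Real.log n) (hnq : 10 * Real.log n ≤ (n : ℝ) * q) :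
    edgeMeasure n q (badSet n q) ≤ ENNReal.ofReal (((n : ℝ) ^ 2)⁻¹) := by
  have hnpos : (0 : ℝ) < n := by exact_mod_cast hn
  have hreal : (n : ℝ) * Real.exp (-(2 * Real.log 2 - 1) * ((n : ℝ) * q))
      ≤ ((n : ℝ) ^ 2)⁻¹ := by
    have hc : (3 : ℝ) * Real.log n ≤ (2 * Real.log 2 - 1) * ((n : ℝ) * q) := by
      have hl2 : (0.6931471803 : ℝ) < Real.log 2 := Real.log_two_gt_d9
      have h10 : 10 * Real.log n ≤ (n : ℝ) * q := hnq
      nlinarith [Real.log_nonneg (by exact_mod_cast hn : (1:ℝ) ≤ (n:ℝ))]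
    have hexp : Real.exp (-(2 * Real.log 2 - 1) * ((n : ℝ) * q))
        ≤ Real.exp (-(3 * Real.log n)) := by
      apply Real.exp_le_exp.mpr
      linarith
    have hval : Real.exp (-(3 * Real.log n)) = (((n : ℝ)) ^ 3)⁻¹ := by
      rw [Real.exp_neg]
      congr 1
      rw [show (3 : ℝ) * Real.log n = ((3 : ℕ) : ℝ) * Real.log n by norm_num,
        Real.exp_nat_mul, Real.exp_log hnpos]
    calc (n : ℝ) * Real.exp (-(2 * Real.log 2 - 1) * ((n : ℝ) * q))
        ≤ (n : ℝ) * (((n : ℝ)) ^ 3)⁻¹ := by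
          rw [← hval]
          exact mul_le_mul_of_nonneg_left hexp hnpos.le
      _ = ((n : ℝ) ^ 2)⁻¹ := by
          field_simp
  calc edgeMeasure n q (badSet n q)
      ≤ ∑ i : Fin n, edgeMeasure n q {ω | 2 * (n : ℝ) * q ≤ deg n ω i} :=
        measure_iUnion_fintype_le _ _
    _ ≤ ∑ _i : Fin n, ENNReal.ofReal (Real.exp (-(2 * Real.log 2 - 1) * ((n : ℝ) * q))) :=
        Finset.sum_le_sum fun i _ => chernoff n q h0 h1 i
    _ = (n : ℝ≥0∞) * ENNReal.ofReal (Real.exp (-(2 * Real.log 2 - 1) * ((n : ℝ) * q))) := by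
        rw [Finset.sum_const, Finset.card_univ, Fintype.card_fin, nsmul_eq_mul]
    _ = ENNReal.ofReal ((n : ℝ) * Real.exp (-(2 * Real.log 2 - 1) * ((n : ℝ) * q))) := by
        rw [ENNReal.ofReal_mul (by positivity), ENNReal.ofReal_natCast]
    _ ≤ ENNReal.ofReal (((n : ℝ) ^ 2)⁻¹) := ENNReal.ofReal_le_ofReal hreal

end Stmt10Aux
namespace Stmt10Aux

lemma adj_sq (n : ℕ) (ω : Fin n × Fin n → Bool) (i j : Fin n) :
    adjMatrix n ω i j ^ 2 = adjMatrix n ω i j := by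
  unfold adjMatrix; split_ifs <;> norm_num

lemma adj_nonneg (n : ℕ) (ω : Fin n × Fin n → Bool) (i j : Fin n) :
    0 ≤ adjMatrix n ω i j := by
  unfold adjMatrix; split_ifs <;> norm_num

lemma deg_nonneg (n : ℕ) (ω : Fin n × Fin n → Bool) (i : Fin n) : 0 ≤ deg n ω i :=
  Finset.sum_nonneg fun j _ => adj_nonneg n ω i j

lemma frobNorm_sq {m : Type*} [Fintype m] (M : Matrix m m ℝ) :
    frobNorm M ^ 2 = ∑ i, ∑ j, ‖M i j‖ ^ 2 :=
  Real.sq_sqrt (Finset.sum_nonneg fun i _ => Finset.sum_nonneg fun j _ => by positivity)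

lemma sum_sq_one (n : ℕ) :
    ∑ i : Fin n, ∑ j : Fin n, ‖(1 : Matrix (Fin n) (Fin n) ℝ) i j‖ ^ 2 = (n : ℝ) := by
  have h : ∀ i j : Fin n, ‖(1 : Matrix (Fin n) (Fin n) ℝ) i j‖ ^ 2
      = if i = j then (1 : ℝ) else 0 := by
    intro i j; rw [Matrix.one_apply]; split_ifs <;> simp
  simp only [h]
  simp [Finset.sum_ite_eq]

lemma sum_sq_neg_one (n : ℕ) :
    ∑ i : Fin n, ∑ j : Fin n, ‖(-1 : Matrix (Fin n) (Fin n) ℝ) i j‖ ^ 2 = (n : ℝ) := by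
  have h : ∀ i j : Fin n, ‖(-1 : Matrix (Fin n) (Fin n) ℝ) i j‖ ^ 2
      = ‖(1 : Matrix (Fin n) (Fin n) ℝ) i j‖ ^ 2 := by
    intro i j; rw [Matrix.neg_apply, norm_neg]
  simp only [h]
  exact sum_sq_one n

lemma sum_sq_smul_adj (n : ℕ) (q : ℝ) (ω : Fin n × Fin n → Bool)
    (hα : 0 ≤ ((n : ℝ) - 1) * q - 1) :
    ∑ i : Fin n, ∑ j : Fin n,
        ‖(((Real.sqrt (((n : ℝ) - 1) * q - 1))⁻¹ : ℝ) • adjMatrix n ω) i j‖ ^ 2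
      = (((n : ℝ) - 1) * q - 1)⁻¹ * ∑ i, deg n ω i := by
  rw [Finset.mul_sum]
  refine Finset.sum_congr rfl fun i _ => ?_
  unfold deg
  rw [Finset.mul_sum]
  refine Finset.sum_congr rfl fun j _ => ?_
  rw [Matrix.smul_apply, smul_eq_mul, Real.norm_eq_abs, sq_abs, mul_pow,
    inv_pow, Real.sq_sqrt hα, adj_sq]

lemma sum_sq_diagBlock (n : ℕ) (c : ℝ) (d : Fin n → ℝ) :
    ∑ i : Fin n, ∑ j : Fin n,
        ‖(c • ((1 : Matrix (Fin n) (Fin n) ℝ) - Matrix.diagonal d)) i j‖ ^ 2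
      = ∑ i : Fin n, (c * (1 - d i)) ^ 2 := by
  refine Finset.sum_congr rfl fun i _ => ?_
  rw [Finset.sum_eq_single i]
  · rw [Matrix.smul_apply, Matrix.sub_apply, Matrix.one_apply_eq, Matrix.diagonal_apply_eq,
      smul_eq_mul, Real.norm_eq_abs, sq_abs]
  · intro j _ hj
    rw [Matrix.smul_apply, Matrix.sub_apply, Matrix.one_apply_ne (Ne.symm hj),
      Matrix.diagonal_apply_ne' _ hj, smul_eq_mul]
    simp
  · intro h; exact absurd (Finset.mem_univ i) h

end Stmt10Aux
namespace Stmt10Aux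

lemma det_bound (n : ℕ) (q : ℝ) (ω : Fin n × Fin n → Bool)
    (hq0 : 0 < q) (hq1 : q ≤ 1)
    (hlog : 1 ≤ Real.log n) (hnq : 10 * Real.log n ≤ (n : ℝ) * q)
    (hdeg : ∀ i, deg n ω i < 2 * (n : ℝ) * q) :
    (1 / (2 * (n : ℝ))) * frobNorm (Ht0mat n q ω) ^ 2 ≤ 6 ∧
    (1 / (2 * (n : ℝ))) * frobNorm (Ht0mat n q ω + Emat n q ω) ^ 2 ≤ 6 := by
  have hβ10 : (10 : ℝ) ≤ (n : ℝ) * q := by nlinarith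
  have hβpos : (0 : ℝ) < (n : ℝ) * q := by linarith
  have hncast : (0 : ℝ) ≤ (n : ℝ) := Nat.cast_nonneg n
  have hnpos : (0 : ℝ) < (n : ℝ) := by nlinarith
  have hαβ : (4 / 5 : ℝ) * ((n : ℝ) * q) ≤ ((n : ℝ) - 1) * q - 1 := by nlinarith
  have hαpos : (0 : ℝ) < ((n : ℝ) - 1) * q - 1 := by nlinarith
  have hαinv : (((n : ℝ) - 1) * q - 1)⁻¹ ≤ ((4 / 5 : ℝ) * ((n : ℝ) * q))⁻¹ :=
    inv_anti₀ (by positivity) hαβ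
  have hαinvpos : (0 : ℝ) < (((n : ℝ) - 1) * q - 1)⁻¹ := by positivity
  have hsumdeg : ∑ i, deg n ω i ≤ (n : ℝ) * (2 * ((n : ℝ) * q)) := by
    calc ∑ i, deg n ω i ≤ ∑ _i : Fin n, 2 * (n : ℝ) * q :=
          Finset.sum_le_sum fun i _ => (hdeg i).le
      _ = (n : ℝ) * (2 * ((n : ℝ) * q)) := by
          rw [Finset.sum_const, Finset.card_univ, Fintype.card_fin, nsmul_eq_mul]; ring
  have hsumdeg_nonneg : 0 ≤ ∑ i, deg n ω i :=
    Finset.sum_nonneg fun i _ => deg_nonneg n ω i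
  have hterm1 : (((n : ℝ) - 1) * q - 1)⁻¹ * ∑ i, deg n ω i ≤ (5 / 2 : ℝ) * (n : ℝ) := by
    calc (((n : ℝ) - 1) * q - 1)⁻¹ * ∑ i, deg n ω i
        ≤ ((4 / 5 : ℝ) * ((n : ℝ) * q))⁻¹ * ((n : ℝ) * (2 * ((n : ℝ) * q))) :=
          mul_le_mul hαinv hsumdeg hsumdeg_nonneg (by positivity)
      _ = (5 / 2 : ℝ) * (n : ℝ) := by field_simp; ring
  constructor
  · have hfrob : frobNorm (Ht0mat n q ω) ^ 2
        = (((n : ℝ) - 1) * q - 1)⁻¹ * (∑ i, deg n ω i) + ((n : ℝ) + (n : ℝ)) := by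
      rw [frobNorm_sq]
      unfold Ht0mat
      simp only [Fintype.sum_sum_type, Matrix.fromBlocks_apply₁₁, Matrix.fromBlocks_apply₁₂,
        Matrix.fromBlocks_apply₂₁, Matrix.fromBlocks_apply₂₂, Matrix.zero_apply, norm_zero,
        Finset.sum_add_distrib]
      rw [sum_sq_smul_adj n q ω hαpos.le, sum_sq_neg_one, sum_sq_one]
      simp
      ring
    rw [hfrob]
    have hle : (((n : ℝ) - 1) * q - 1)⁻¹ * (∑ i, deg n ω i) + ((n : ℝ) + (n : ℝ))
        ≤ (5 / 2 : ℝ) * (n : ℝ) + ((n : ℝ) + (n : ℝ)) := by linarith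
    calc (1 / (2 * (n : ℝ))) * ((((n : ℝ) - 1) * q - 1)⁻¹ * (∑ i, deg n ω i)
          + ((n : ℝ) + (n : ℝ)))
        ≤ (1 / (2 * (n : ℝ))) * ((5 / 2 : ℝ) * (n : ℝ) + ((n : ℝ) + (n : ℝ))) :=
          mul_le_mul_of_nonneg_left hle (by positivity)
      _ = 9 / 4 := by field_simp; ring
      _ ≤ 6 := by norm_num
  · have hmat : Ht0mat n q ω + Emat n q ω
        = Matrix.fromBlocks (((Real.sqrt (((n : ℝ) - 1) * q - 1))⁻¹ : ℝ) • adjMatrix n ω)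
          (((((n : ℝ) - 1) * q - 1)⁻¹ : ℝ) • ((1 : Matrix (Fin n) (Fin n) ℝ)
            - Matrix.diagonal (deg n ω))) 1 0 := by
      unfold Ht0mat Emat
      rw [Matrix.fromBlocks_add, add_zero, add_zero, add_zero, neg_add_cancel_left]
    have hper : ∀ i : Fin n, ((((n : ℝ) - 1) * q - 1)⁻¹ * (1 - deg n ω i)) ^ 2 ≤ 7 := by
      intro i
      have hd0 := deg_nonneg n ω i
      have hd2 := hdeg i
      have h1 : (1 - deg n ω i) ^ 2 ≤ (1 + 2 * ((n : ℝ) * q)) ^ 2 := by nlinarith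
      have h2 : ((((n : ℝ) - 1) * q - 1)⁻¹) ^ 2 ≤ (((4 / 5 : ℝ) * ((n : ℝ) * q))⁻¹) ^ 2 :=
        pow_le_pow_left₀ hαinvpos.le hαinv 2
      calc ((((n : ℝ) - 1) * q - 1)⁻¹ * (1 - deg n ω i)) ^ 2
          = ((((n : ℝ) - 1) * q - 1)⁻¹) ^ 2 * (1 - deg n ω i) ^ 2 := by ring
        _ ≤ (((4 / 5 : ℝ) * ((n : ℝ) * q))⁻¹) ^ 2 * (1 + 2 * ((n : ℝ) * q)) ^ 2 :=
            mul_le_mul h2 h1 (sq_nonneg _) (by positivity)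
        _ ≤ 7 := by
            rw [inv_pow, inv_mul_le_iff₀ (by positivity)]
            nlinarith
    have hsum7 : ∑ i : Fin n, ((((n : ℝ) - 1) * q - 1)⁻¹ * (1 - deg n ω i)) ^ 2
        ≤ 7 * (n : ℝ) := by
      calc ∑ i : Fin n, ((((n : ℝ) - 1) * q - 1)⁻¹ * (1 - deg n ω i)) ^ 2
          ≤ ∑ _i : Fin n, (7 : ℝ) := Finset.sum_le_sum fun i _ => hper i
        _ = 7 * (n : ℝ) := by
            rw [Finset.sum_const, Finset.card_univ, Fintype.card_fin, nsmul_eq_mul]; ring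
    have hfrob : frobNorm (Ht0mat n q ω + Emat n q ω) ^ 2
        = (((n : ℝ) - 1) * q - 1)⁻¹ * (∑ i, deg n ω i)
          + (∑ i : Fin n, ((((n : ℝ) - 1) * q - 1)⁻¹ * (1 - deg n ω i)) ^ 2 + (n : ℝ)) := by
      rw [frobNorm_sq, hmat]
      simp only [Fintype.sum_sum_type, Matrix.fromBlocks_apply₁₁, Matrix.fromBlocks_apply₁₂,
        Matrix.fromBlocks_apply₂₁, Matrix.fromBlocks_apply₂₂, Matrix.zero_apply, norm_zero,
        Finset.sum_add_distrib]
      rw [sum_sq_smul_adj n q ω hαpos.le, sum_sq_diagBlock, sum_sq_one]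
      simp
      ring
    rw [hfrob]
    have hle : (((n : ℝ) - 1) * q - 1)⁻¹ * (∑ i, deg n ω i)
          + (∑ i : Fin n, ((((n : ℝ) - 1) * q - 1)⁻¹ * (1 - deg n ω i)) ^ 2 + (n : ℝ))
        ≤ (5 / 2 : ℝ) * (n : ℝ) + (7 * (n : ℝ) + (n : ℝ)) := by linarith
    calc (1 / (2 * (n : ℝ))) * ((((n : ℝ) - 1) * q - 1)⁻¹ * (∑ i, deg n ω i)
          + (∑ i : Fin n, ((((n : ℝ) - 1) * q - 1)⁻¹ * (1 - deg n ω i)) ^ 2 + (n : ℝ)))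
        ≤ (1 / (2 * (n : ℝ))) * ((5 / 2 : ℝ) * (n : ℝ) + (7 * (n : ℝ) + (n : ℝ))) :=
          mul_le_mul_of_nonneg_left hle (by positivity)
      _ = 21 / 4 := by field_simp; ring
      _ ≤ 6 := by norm_num
  
end Stmt10Aux
namespace Stmt10Aux

lemma bounded_of_eventually (a : ℕ → ℝ) (N : ℕ) (c : ℝ) (hc : 0 ≤ c)
    (h : ∀ n, N ≤ n → a n ≤ c) : ∃ C, ∀ n, a n ≤ C := by
  refine ⟨c + ∑ k ∈ Finset.range N, |a k|, fun n => ?_⟩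
  by_cases hn : N ≤ n
  · have h0 : (0 : ℝ) ≤ ∑ k ∈ Finset.range N, |a k| :=
      Finset.sum_nonneg fun k _ => abs_nonneg _
    linarith [h n hn]
  · push_neg at hn
    have h1 : a n ≤ |a n| := le_abs_self _
    have h2 : |a n| ≤ ∑ k ∈ Finset.range N, |a k| :=
      Finset.single_le_sum (f := fun k => |a k|) (fun k _ => abs_nonneg _)
        (Finset.mem_range.mpr hn)
    linarith

lemma one_le_log_three : (1 : ℝ) ≤ Real.log 3 := by
  rw [Real.le_log_iff_exp_le (by norm_num : (0:ℝ) < 3)]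
  linarith [Real.exp_one_lt_d9]

end Stmt10Aux
open Stmt10Aux in
/-- almost surely, both `(1/(2n))‖H̃₀‖_F²` and `(1/(2n))‖H̃₀+E‖_F²`
are bounded sequences. -/
theorem stmt10 (p₀ : ℝ) (hp₀ : p₀ ∈ Set.Ioo (0 : ℝ) 1)
    (p : ℕ → ℝ) (hp : ∀ n, 0 < p n ∧ p n ≤ p₀)
    (hgrow : Tendsto (fun n : ℕ => (n : ℝ) * p n / Real.log n) atTop atTop)
    (Ω : Type*) [MeasurableSpace Ω] (ℙ : Measure Ω) [IsProbabilityMeasure ℙ]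
    (X : (n : ℕ) → Ω → (Fin n × Fin n → Bool))
    (hXmeas : ∀ n, Measurable (X n))
    (hXlaw : ∀ n, Measure.map (X n) ℙ = edgeMeasure n (p n))
    (hXindep : ProbabilityTheory.iIndepFun X ℙ) :
    ∀ᵐ ω ∂ℙ,
      (∃ C : ℝ, ∀ n : ℕ,
        (1 / (2 * (n : ℝ))) * frobNorm (Ht0mat n (p n) (X n ω)) ^ 2 ≤ C) ∧
      (∃ C : ℝ, ∀ n : ℕ,
        (1 / (2 * (n : ℝ))) *
          frobNorm (Ht0mat n (p n) (X n ω) + Emat n (p n) (X n ω)) ^ 2 ≤ C) := by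
  classical
  have hq0 : ∀ n, 0 < p n := fun n => (hp n).1
  have hq1 : ∀ n, p n ≤ 1 := fun n => le_trans (hp n).2 hp₀.2.le
  obtain ⟨N₀, hN₀⟩ := Filter.eventually_atTop.mp (hgrow.eventually_ge_atTop 10)
  set N₁ : ℕ := max N₀ 3 with hN₁def
  have hdet : ∀ n, N₁ ≤ n → 1 ≤ Real.log n ∧ 10 * Real.log n ≤ (n : ℝ) * p n := by
    intro n hn
    have hn3 : (3 : ℕ) ≤ n := le_trans (le_max_right _ _) hn
    have hn3' : (3 : ℝ) ≤ (n : ℝ) := by exact_mod_cast hn3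
    have hlog : 1 ≤ Real.log n := le_trans one_le_log_three
      (Real.log_le_log (by norm_num) hn3')
    have hlogpos : (0 : ℝ) < Real.log n := by linarith
    have h10 : (10 : ℝ) ≤ (n : ℝ) * p n / Real.log n :=
      hN₀ n (le_trans (le_max_left _ _) hn)
    exact ⟨hlog, (le_div_iff₀ hlogpos).1 h10⟩
  set s : ℕ → Set Ω := fun n => X n ⁻¹' badSet n (p n) with hsdef
  have hmap : ∀ n, ℙ (s n) = edgeMeasure n (p n) (badSet n (p n)) := by
    intro n
    rw [← hXlaw n, Measure.map_apply (hXmeas n) (badSet_meas n (p n))]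
  set b : ℕ → ℝ := fun n => if n < N₁ then 1 else ((n : ℝ) ^ 2)⁻¹ with hbdef
  have hbnn : ∀ n, 0 ≤ b n := by
    intro n; simp only [hbdef]; split_ifs <;> positivity
  have hble : ∀ n, ℙ (s n) ≤ ENNReal.ofReal (b n) := by
    intro n
    by_cases hn : n < N₁
    · simp only [hbdef, if_pos hn, ENNReal.ofReal_one]
      exact prob_le_one
    · push_neg at hn
      simp only [hbdef, if_neg (not_lt.mpr hn)]
      rw [hmap n]
      have hn1 : 1 ≤ n := le_trans (by omega : 1 ≤ N₁) hn
      exact badSet_bound n (p n) (hq0 n).le (hq1 n) hn1 (hdet n hn).1 (hdet n hn).2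
  have hbsummable : Summable b := by
    have base : Summable (fun m : ℕ => ((m : ℝ) ^ 2)⁻¹) := by
      have := Real.summable_one_div_nat_pow.mpr (by norm_num : 1 < 2)
      simpa [one_div] using this
    have h2 : Summable (fun n : ℕ => b (n + N₁)) := by
      apply ((summable_nat_add_iff N₁).2 base).congr
      intro n
      simp only [hbdef]
      rw [if_neg (by omega)]
    exact (summable_nat_add_iff N₁).1 h2
  have hsum : (∑' n, ℙ (s n)) ≠ ⊤ := by
    have hle : (∑' n, ℙ (s n)) ≤ ENNReal.ofReal (∑' n, b n) := by
      calc (∑' n, ℙ (s n)) ≤ ∑' n, ENNReal.ofReal (b n) := ENNReal.tsum_le_tsum hble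
        _ = ENNReal.ofReal (∑' n, b n) :=
          (ENNReal.ofReal_tsum_of_nonneg hbnn hbsummable).symm
    exact ne_top_of_le_ne_top ENNReal.ofReal_ne_top hle
  have hae := MeasureTheory.ae_eventually_notMem hsum
  filter_upwards [hae] with ω hω
  obtain ⟨N₂, hN₂⟩ := Filter.eventually_atTop.mp hω
  have hgood : ∀ n, max N₁ N₂ ≤ n →
      (1 / (2 * (n : ℝ))) * frobNorm (Ht0mat n (p n) (X n ω)) ^ 2 ≤ 6 ∧
      (1 / (2 * (n : ℝ))) *
        frobNorm (Ht0mat n (p n) (X n ω) + Emat n (p n) (X n ω)) ^ 2 ≤ 6 := by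
    intro n hn
    have h1 : N₁ ≤ n := le_trans (le_max_left _ _) hn
    have h2 : N₂ ≤ n := le_trans (le_max_right _ _) hn
    have hnot : X n ω ∉ badSet n (p n) := hN₂ n h2
    simp only [badSet, Set.mem_iUnion, Set.mem_setOf_eq, not_exists, not_le] at hnot
    exact det_bound n (p n) (X n ω) (hq0 n) (hq1 n) (hdet n h1).1 (hdet n h1).2 hnot
  exact ⟨bounded_of_eventually _ (max N₁ N₂) 6 (by norm_num) (fun n hn => (hgood n hn).1),
    bounded_of_eventually _ (max N₁ N₂) 6 (by norm_num) (fun n hn => (hgood n hn).2)⟩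

end
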